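/- Let X and Y be standard Borel spaces and let i : X → Y be a measurable embedding. Then for all probability measures p, q on X, the map r ↦ (i × i)♯ r is a bijection from the set of couplings of (p,q) onto the set of couplings of (i♯p, i♯q); that is, it is injective, and every coupling s of i♯p and i♯q equals (i × i)♯ r for a (unique) coupling r of p and q. -/

import Mathlib

open MeasureTheory ProbabilityTheory

variable {X Y : Type*} [MeasurableSpace X] [StandardBorelSpace X] [Nonempty X]
  [MeasurableSpace Y] [StandardBorelSpace Y] [Nonempty Y]

/-- For a measurable embedding `i : X → Y`, the map `r ↦ (i × i)♯ r` is a bijection from the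
couplings of `(p, q)` onto the couplings of `(i♯p, i♯q)`: it is injective, and every coupling
of `i♯p` and `i♯q` is the image of a coupling of `p` and `q`. -/
theorem map_prodMap_coupling_bijective (i : X → Y) (hi : MeasurableEmbedding i)
    (p q : Measure X) [IsProbabilityMeasure p] [IsProbabilityMeasure q] :
    (∀ r r' : Measure (X × X), IsProbabilityMeasure r → IsProbabilityMeasure r' →
      r.fst = p → r.snd = q → r'.fst = p → r'.snd = q →
      r.map (Prod.map i i) = r'.map (Prod.map i i) → r = r') ∧
    (∀ s : Measure (Y × Y), IsProbabilityMeasure s →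
      s.fst = p.map i → s.snd = q.map i →
      ∃ r : Measure (X × X), IsProbabilityMeasure r ∧ r.fst = p ∧ r.snd = q ∧
        r.map (Prod.map i i) = s) := by
  have hii : MeasurableEmbedding (Prod.map i i) := hi.prodMap hi
  constructor
  · intro r r' _ _ _ _ _ _ h
    have := congrArg (Measure.comap (Prod.map i i)) h
    rwa [hii.comap_map, hii.comap_map] at this
  · intro s hs hfst hsnd
    -- s is supported on the range of Prod.map i i
    have hrng : Set.range (Prod.map i i) = Set.range i ×ˢ Set.range i :=
      Set.range_prodMap
    have hm : MeasurableSet (Set.range i) := hi.measurableSet_range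
    have h1 : s ((Set.range i)ᶜ ×ˢ Set.univ) = 0 := by
      have : s.fst (Set.range i)ᶜ = 0 := by
        rw [hfst, Measure.map_apply hi.measurable hm.compl]
        simp
      rw [Measure.fst_apply hm.compl] at this
      simpa [Set.prod_univ] using this
    have h2 : s (Set.univ ×ˢ (Set.range i)ᶜ) = 0 := by
      have : s.snd (Set.range i)ᶜ = 0 := by
        rw [hsnd, Measure.map_apply hi.measurable hm.compl]
        simp
      rw [Measure.snd_apply hm.compl] at this
      simpa [Set.univ_prod] using this
    have hcompl : s (Set.range (Prod.map i i))ᶜ = 0 := by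
      rw [hrng]
      have hsub : (Set.range i ×ˢ Set.range i)ᶜ ⊆
          (Set.range i)ᶜ ×ˢ Set.univ ∪ Set.univ ×ˢ (Set.range i)ᶜ := by
        rintro ⟨a, b⟩ h
        simp only [Set.mem_compl_iff, Set.mem_prod, not_and_or] at h
        rcases h with h | h
        · exact Or.inl (by simp [h])
        · exact Or.inr (by simp [h])
      exact measure_mono_null hsub (by
        refine measure_union_null h1 h2)
    set r := s.comap (Prod.map i i) with hr
    have hmap : r.map (Prod.map i i) = s := by
      rw [hr, hii.map_comap, Measure.restrict_eq_self_of_ae_mem]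
      rw [Filter.eventually_iff, mem_ae_iff]
      rw [hrng] at hcompl
      simp
      exact hcompl
    have hprob : IsProbabilityMeasure r := by
      constructor
      have := congrArg (fun μ : Measure (Y × Y) => μ Set.univ) hmap
      rw [Measure.map_apply hii.measurable MeasurableSet.univ] at this
      simpa using this.trans hs.measure_univ
    refine ⟨r, hprob, ?_, ?_, hmap⟩
    · have : (r.fst).map i = p.map i := by
        rw [Measure.fst, Measure.map_map hi.measurable measurable_fst, ← hfst, Measure.fst,
          ← hmap, Measure.map_map measurable_fst hii.measurable]
        rfl
      have := congrArg (Measure.comap i) this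
      rwa [hi.comap_map, hi.comap_map] at this
    · have : (r.snd).map i = q.map i := by
        rw [Measure.snd, Measure.map_map hi.measurable measurable_snd, ← hsnd, Measure.snd,
          ← hmap, Measure.map_map measurable_snd hii.measurable]
        rfl
      have := congrArg (Measure.comap i) this
      rwa [hi.comap_map, hi.comap_map] at this
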